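/- arXiv:1001.0638 — 3 statements merged into one kernel-verified Lean document; each statement's English description precedes it below -/
import Mathlib

section
/- Let 0 < α < 2 and, for i = 1, 2, let T_i be a non-singular automorphism of a σ-finite standard Borel measure space (Ω_i, ℱ_i, μ_i), with multiplicative Maharam extension T̃_{i,α} on Ω_i × (0,∞) equipped with the measure μ_i ⊗ s^{-(1+α)}ds. Let (S_t)_{t>0} and (Z_t)_{t>0} denote the flows on Ω_1 × (0,∞) and Ω_2 × (0,∞) respectively given by multiplication of the second coordinate by t. Suppose Φ : Ω_1 × (0,∞) → Ω_2 × (0,∞) is a measurable map with Φ_*(μ_1 ⊗ s^{-(1+α)}ds) = μ_2 ⊗ s^{-(1+α)}ds, Φ ∘ T̃_{1,α} = T̃_{2,α} ∘ Φ almost everywhere, and Φ ∘ S_t = Z_t ∘ Φ almost everywhere for every t > 0. Then there exists a measurable map φ : Ω_1 → Ω_2 which is a non-singular factor map: φ_*μ_1 is equivalent to μ_2 and φ ∘ T_1 = T_2 ∘ φ μ_1-almost everywhere. Moreover, if Φ is a bi-measurable bijection between conull sets, then φ is a bi-measurable bijection between conull sets (a non-singular isomorphism). -/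
/-- A standard Borel space equipped with a σ-finite-to-be measure and a
bi-measurable automorphism. -/
structure StdSystem : Type 1 where
  carrier : Type
  [meas : MeasurableSpace carrier]
  [borel : StandardBorelSpace carrier]
  μ : MeasureTheory.Measure carrier
  T : carrier ≃ᵐ carrier

attribute [instance] StdSystem.meas StdSystem.borel

open MeasureTheory Filter Set
open scoped ENNReal

noncomputable section

noncomputable section

/-- The left shift on two-sided real sequences. -/
def shiftZ : (ℤ → ℝ) → (ℤ → ℝ) := fun x n => x (n + 1)

/-- `T` is a non-singular automorphism of `(Ω, μ)`: the pushforward of `μ` by `T` is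
equivalent to `μ`. -/
def Nonsingular {Ω : Type*} [MeasurableSpace Ω] (T : Ω ≃ᵐ Ω) (μ : Measure Ω) : Prop :=
  Measure.map (⇑T) μ ≪ μ ∧ μ ≪ Measure.map (⇑T) μ

/-- `w_T = d((T⁻¹)_*μ)/dμ`, as a real-valued function. -/
def wgt {Ω : Type*} [MeasurableSpace Ω] (T : Ω ≃ᵐ Ω) (μ : Measure Ω) : Ω → ℝ :=
  fun ω => ((Measure.map (⇑T.symm) μ).rnDeriv μ ω).toReal

/-- `w_{T^n} = d((T^{-n})_*μ)/dμ`, as a real-valued function. -/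
def wgtn {Ω : Type*} [MeasurableSpace Ω] (T : Ω ≃ᵐ Ω) (μ : Measure Ω) (n : ℕ) : Ω → ℝ :=
  fun ω => ((Measure.map ((⇑T.symm)^[n]) μ).rnDeriv μ ω).toReal

/-- The measure `s^{-(1+α)} ds` on `(0,∞)`. -/
def mIoi (α : ℝ) : Measure ℝ :=
  (volume.restrict (Set.Ioi (0:ℝ))).withDensity fun s => ENNReal.ofReal (s ^ (-(1+α)))

/-- The measure `|s|^{-(1+α)} ds` on `ℝ ∖ {0}`. -/
def mSym (α : ℝ) : Measure ℝ :=
  (volume.restrict ({(0:ℝ)}ᶜ)).withDensity fun s => ENNReal.ofReal (|s| ^ (-(1+α)))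

/-- The multiplicative Maharam extension `T̃_α (ω, s) = (Tω, s ⬝ w_T(ω)^{1/α})`. -/
def Mah {Ω : Type*} [MeasurableSpace Ω] (α : ℝ) (T : Ω ≃ᵐ Ω) (μ : Measure Ω) :
    Ω × ℝ → Ω × ℝ :=
  fun p => (T p.1, p.2 * (wgt T μ p.1) ^ (1/α))

/-- The additive Maharam extension `T̃ (ω, s) = (Tω, s − log w_T(ω))`. -/
def MahAdd {Ω : Type*} [MeasurableSpace Ω] (T : Ω ≃ᵐ Ω) (μ : Measure Ω) :
    Ω × ℝ → Ω × ℝ :=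
  fun p => (T p.1, p.2 - Real.log (wgt T μ p.1))

/-- The measure `e^s ds` on `ℝ`. -/
def expMeasure : Measure ℝ := volume.withDensity fun s => ENNReal.ofReal (Real.exp s)

/-- An isomorphism of measure-preserving systems: a bi-measurable bijection `Φ` between
invariant conull subsets carrying `μ` to `ν` and conjugating `T` to `R`. -/
def IsMPIso {X Y : Type*} [MeasurableSpace X] [MeasurableSpace Y]
    (μ : Measure X) (ν : Measure Y) (T : X → X) (R : Y → Y) (Φ : X → Y) : Prop :=
  Measurable Φ ∧ Measure.map Φ μ = ν ∧
  ∃ (A : Set X) (B : Set Y) (Ψ : Y → X),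
    MeasurableSet A ∧ MeasurableSet B ∧ μ Aᶜ = 0 ∧ ν Bᶜ = 0 ∧
    T ⁻¹' A = A ∧ R ⁻¹' B = B ∧ Measurable Ψ ∧
    (∀ x ∈ A, Φ x ∈ B) ∧ (∀ y ∈ B, Ψ y ∈ A) ∧
    (∀ x ∈ A, Ψ (Φ x) = x) ∧ (∀ y ∈ B, Φ (Ψ y) = y) ∧
    (∀ x ∈ A, Φ (T x) = R (Φ x))

/-- A bi-measurable bijection between conull subsets. -/
def AEBij {X Y : Type*} [MeasurableSpace X] [MeasurableSpace Y]
    (μ : Measure X) (ν : Measure Y) (Φ : X → Y) : Prop :=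
  ∃ (A : Set X) (B : Set Y) (Ψ : Y → X),
    MeasurableSet A ∧ MeasurableSet B ∧ μ Aᶜ = 0 ∧ ν Bᶜ = 0 ∧ Measurable Ψ ∧
    (∀ x ∈ A, Φ x ∈ B) ∧ (∀ y ∈ B, Ψ y ∈ A) ∧
    (∀ x ∈ A, Ψ (Φ x) = x) ∧ (∀ y ∈ B, Φ (Ψ y) = y)

/-- `Q` is the Lévy measure of a stationary `α`-stable process on `ℝ^ℤ`. -/
def IsStableLevy (α : ℝ) (Q : Measure (ℤ → ℝ)) : Prop :=
  Measure.map shiftZ Q = Q ∧ Q {x | x = fun _ => 0} = 0 ∧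
  (∫⁻ x, ENNReal.ofReal (min ((x 0)^2) 1) ∂Q) < ⊤ ∧
  ∀ t : ℝ, 0 < t →
    Measure.map (fun x (n : ℤ) => t * x n) Q = ENNReal.ofReal (t ^ (-α)) • Q

/-- The truncation function `c(x) = max(−1, min(x,1))`. -/
def cutoff (x : ℝ) : ℝ := max (-1) (min x 1)

/-- `P` is the law of the stationary infinitely divisible process with Lévy measure `Q`,
as given by the Lévy–Khinchine formula. -/
def IsLevyLaw (Q P : Measure (ℤ → ℝ)) : Prop :=
  IsProbabilityMeasure P ∧ Measure.map shiftZ P = P ∧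
  ∀ (n₁ n₂ : ℤ), n₁ ≤ n₂ → ∀ a : ℤ → ℝ,
    Integrable (fun x : ℤ → ℝ =>
      Complex.exp (Complex.I * ((∑ k ∈ Finset.Icc n₁ n₂, a k * x k : ℝ) : ℂ)) - 1
        - Complex.I * ((∑ k ∈ Finset.Icc n₁ n₂, a k * cutoff (x k) : ℝ) : ℂ)) Q ∧
    (∫ x, Complex.exp (Complex.I * ((∑ k ∈ Finset.Icc n₁ n₂, a k * x k : ℝ) : ℂ)) ∂P)
      = Complex.exp (∫ x,
          (Complex.exp (Complex.I * ((∑ k ∈ Finset.Icc n₁ n₂, a k * x k : ℝ) : ℂ)) - 1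
            - Complex.I * ((∑ k ∈ Finset.Icc n₁ n₂, a k * cutoff (x k) : ℝ) : ℂ)) ∂Q)

namespace MahAux

instance (α : ℝ) : SigmaFinite (mIoi α) := by
  unfold mIoi; infer_instance

lemma mIoi_null_iff (α : ℝ) (s : Set ℝ) : mIoi α s = 0 ↔ volume (s ∩ Set.Ioi 0) = 0 := by
  rw [mIoi, withDensity_apply_eq_zero (by fun_prop)]
  rw [Measure.restrict_apply' measurableSet_Ioi]
  have : {x : ℝ | ENNReal.ofReal (x ^ (-(1+α))) ≠ 0} ∩ s ∩ Set.Ioi 0 = s ∩ Set.Ioi 0 := by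
    ext x
    simp only [Set.mem_inter_iff, Set.mem_setOf_eq, Set.mem_Ioi, ne_eq]
    constructor
    · rintro ⟨⟨-, hx⟩, hx0⟩; exact ⟨hx, hx0⟩
    · rintro ⟨hx, hx0⟩
      refine ⟨⟨?_, hx⟩, hx0⟩
      simp only [ne_eq, ENNReal.ofReal_eq_zero, not_le]
      exact Real.rpow_pos_of_pos hx0 _
  rw [this]

lemma mIoi_ne_zero (α : ℝ) : mIoi α ≠ 0 := by
  intro h
  have := (mIoi_null_iff α Set.univ).mp (by rw [h]; rfl)
  simp [Real.volume_Ioi] at this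

lemma mIoi_univ_ne_zero (α : ℝ) : mIoi α Set.univ ≠ 0 := by
  intro h
  have := (mIoi_null_iff α Set.univ).mp h
  simp [Real.volume_Ioi] at this

instance (α : ℝ) : (ae (mIoi α)).NeBot := ae_neBot.mpr (mIoi_ne_zero α)

lemma mIoi_ae_pos (α : ℝ) : ∀ᵐ s ∂(mIoi α), 0 < s := by
  rw [ae_iff]
  rw [mIoi_null_iff]
  convert measure_empty
  · ext x; simp only [Set.mem_inter_iff, Set.mem_setOf_eq, Set.mem_Ioi, not_lt]
    simp only [Set.mem_empty_iff_false, iff_false]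
    rintro ⟨h1, h2⟩; exact absurd h2 (not_lt.mpr h1)
  · infer_instance

lemma mIoi_null_preimage_mul {α c : ℝ} (hc : 0 < c) {A : Set ℝ}
    (h : mIoi α A = 0) : mIoi α ((· * c) ⁻¹' A) = 0 := by
  rw [mIoi_null_iff] at h ⊢
  refine measure_mono_null (fun x hx => ?_) ((Real.volume_preimage_mul_right (ne_of_gt hc) _).trans
    (by rw [h, mul_zero]) : volume ((· * c) ⁻¹' (A ∩ Set.Ioi 0)) = 0)
  rcases hx with ⟨hxA, hx0⟩
  exact ⟨hxA, mul_pos hx0 hc⟩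

/-- measurable equality set for maps into a standard Borel space -/
lemma msEqR {Y : Type*} [MeasurableSpace Y] {u v : Y → ℝ} (hu : Measurable u)
    (hv : Measurable v) : MeasurableSet {y | u y = v y} := by
  have : {y | u y = v y} = (fun y => u y - v y) ⁻¹' {0} := by
    ext y; simp [sub_eq_zero]
  rw [this]
  exact (hu.sub hv) (measurableSet_singleton 0)

lemma msEq {Y Z : Type*} [MeasurableSpace Y] [MeasurableSpace Z] [StandardBorelSpace Z]
    {u v : Y → Z} (hu : Measurable u) (hv : Measurable v) :
    MeasurableSet {y | u y = v y} := by
  have me := MeasureTheory.measurableEmbedding_embeddingReal Z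
  have : {y | u y = v y}
      = {y | MeasureTheory.embeddingReal Z (u y) = MeasureTheory.embeddingReal Z (v y)} := by
    ext y; exact ⟨fun h => congrArg _ h, fun h => me.injective h⟩
  rw [this]
  exact msEqR (me.measurable.comp hu) (me.measurable.comp hv)

/-- quasi-invariance of the product measure under skew scaling maps -/
lemma prod_null_preimage {Ω₁ : Type*} [MeasurableSpace Ω₁] (α : ℝ) (μ₁ : Measure Ω₁)
    [SigmaFinite μ₁]
    {T : Ω₁ → Ω₁} (hTm : Measurable T)
    (hT : ∀ Z : Set Ω₁, MeasurableSet Z → μ₁ Z = 0 → μ₁ (T ⁻¹' Z) = 0)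
    {c : Ω₁ → ℝ} (hc : Measurable c) (hcpos : ∀ᵐ ω ∂μ₁, 0 < c ω)
    {N : Set (Ω₁ × ℝ)} (hN : (μ₁.prod (mIoi α)) N = 0) :
    (μ₁.prod (mIoi α)) ((fun p => (T p.1, p.2 * c p.1)) ⁻¹' N) = 0 := by
  obtain ⟨N', hNN', hN'm, hN'0⟩ := exists_measurable_superset_of_null hN
  refine measure_mono_null (Set.preimage_mono hNN') ?_
  have hmeas : Measurable fun p : Ω₁ × ℝ => (T p.1, p.2 * c p.1) :=
    (hTm.comp measurable_fst).prodMk (measurable_snd.mul (hc.comp measurable_fst))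
  rw [Measure.measure_prod_null (hN'm.preimage hmeas)]
  have hsec : (fun ω => (mIoi α) (Prod.mk ω ⁻¹' N')) =ᵐ[μ₁] 0 :=
    (Measure.measure_prod_null hN'm).mp hN'0
  -- the set of bad ω is measurable and null; pull back by T
  set Z : Set Ω₁ := {ω | (mIoi α) (Prod.mk ω ⁻¹' N') ≠ 0} with hZ
  have hZm : MeasurableSet Z :=
    ((measurable_measure_prodMk_left hN'm) (measurableSet_singleton 0)).compl
  have hZ0 : μ₁ Z = 0 := by
    have := ae_iff.mp hsec
    simpa [hZ] using this
  have hTZ : μ₁ (T ⁻¹' Z) = 0 := hT Z hZm hZ0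
  have hTZ' : ∀ᵐ ω ∂μ₁, (mIoi α) (Prod.mk (T ω) ⁻¹' N') = 0 := by
    rw [ae_iff]
    exact hTZ
  filter_upwards [hTZ', hcpos] with ω h1 h2
  have : Prod.mk ω ⁻¹' ((fun p : Ω₁ × ℝ => (T p.1, p.2 * c p.1)) ⁻¹' N')
      = (· * c ω) ⁻¹' (Prod.mk (T ω) ⁻¹' N') := rfl
  simp only [Pi.zero_apply]
  rw [this]
  exact mIoi_null_preimage_mul h2 h1

lemma ae_fst_of_ae_prod {Ω : Type*} [MeasurableSpace Ω] {μ : Measure Ω} {α : ℝ}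
    {Q : Ω → Prop} (h : ∀ᵐ p ∂(μ.prod (mIoi α)), Q p.1) : ∀ᵐ ω ∂μ, Q ω := by
  filter_upwards [Measure.ae_ae_of_ae_prod h] with ω hω
  obtain ⟨s, hs⟩ := hω.exists
  exact hs

lemma descend {Ω₁ Ω₂ : Type*} [MeasurableSpace Ω₁] [MeasurableSpace Ω₂]
    [StandardBorelSpace Ω₂] [Nonempty Ω₂] (α : ℝ)
    (μ₁ : Measure Ω₁) [SigmaFinite μ₁] (μ₂ : Measure Ω₂) [SigmaFinite μ₂]
    (Φ : Ω₁ × ℝ → Ω₂ × ℝ) (hΦm : Measurable Φ)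
    (hΦmap : Measure.map Φ (μ₁.prod (mIoi α)) = μ₂.prod (mIoi α))
    (hΦflow : ∀ t : ℝ, 0 < t → ∀ᵐ p ∂(μ₁.prod (mIoi α)),
      Φ (p.1, t * p.2) = ((Φ p).1, t * (Φ p).2)) :
    ∃ φ : Ω₁ → Ω₂, Measurable φ ∧ Measure.map φ μ₁ ≪ μ₂ ∧ μ₂ ≪ Measure.map φ μ₁ ∧
      (fun p => (Φ p).1) =ᵐ[μ₁.prod (mIoi α)] fun p => φ p.1 := by
  classical
  set m : Measure ℝ := mIoi α with hm
  set P : Measure (Ω₁ × ℝ) := μ₁.prod m with hP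
  set e : Ω₂ → ℝ := MeasureTheory.embeddingReal Ω₂ with he
  have me : MeasurableEmbedding e := MeasureTheory.measurableEmbedding_embeddingReal Ω₂
  set h : Ω₂ → ℝ := fun y => Real.arctan (e y) with hh
  have hmeas : Measurable h := Real.measurable_arctan.comp me.measurable
  have hinj : Function.Injective h := fun a b hab => me.injective (Real.arctan_injective hab)
  have mh : MeasurableEmbedding h := hmeas.measurableEmbedding hinj
  set F : Ω₁ × ℝ → Ω₂ := fun p => (Φ p).1 with hF
  have hFm : Measurable F := measurable_fst.comp hΦm
  set f : Ω₁ × ℝ → ℝ := fun p => h (F p) with hf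
  have hfm : Measurable f := hmeas.comp hFm
  -- the joint bad set for the flow
  set S : Set (ℝ × (Ω₁ × ℝ)) := {q | f (q.2.1, q.1 * q.2.2) ≠ f q.2} with hS
  have hSm : MeasurableSet S := by
    have : MeasurableSet {q : ℝ × (Ω₁ × ℝ) | f (q.2.1, q.1 * q.2.2) = f q.2} :=
      msEqR (hfm.comp ((measurable_fst.comp measurable_snd).prodMk
        (measurable_fst.mul (measurable_snd.comp measurable_snd)))) (hfm.comp measurable_snd)
    exact this.compl
  have hS0 : (m.prod P) S = 0 := by
    rw [Measure.measure_prod_null hSm]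
    filter_upwards [mIoi_ae_pos α] with t ht
    have hfl := hΦflow t ht
    simp only [Pi.zero_apply]
    refine measure_mono_null (fun p hp => ?_) (ae_iff.mp hfl)
    intro hΦp
    apply hp
    show f (p.1, t * p.2) = f p
    simp only [hf, hF, hΦp]
  have hS0' : (P.prod m) (Prod.swap ⁻¹' S) = 0 := by
    rw [← Measure.map_apply measurable_swap hSm, Measure.prod_swap]
    exact hS0
  have key2 : ∀ᵐ ω ∂μ₁, ∀ᵐ s ∂m, m {t | f (ω, t * s) ≠ f (ω, s)} = 0 := by
    have h1 := Measure.measure_ae_null_of_prod_null hS0'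
    have h2 : ∀ᵐ p ∂P, m {t | f (p.1, t * p.2) ≠ f p} = 0 := by
      filter_upwards [h1] with p hp
      exact hp
    exact Measure.ae_ae_of_ae_prod h2
  set g : Ω₁ → ℝ := fun ω => ∫ s in Set.Ioc (1:ℝ) 2, f (ω, s) with hg
  have hgm : Measurable g :=
    (hfm.stronglyMeasurable.integral_prod_right').measurable
  have main : ∀ᵐ ω ∂μ₁, ∃ y : Ω₂, g ω = h y ∧ ∀ᵐ s ∂m, F (ω, s) = y := by
    filter_upwards [key2] with ω hω
    obtain ⟨s₀, hs₀null, hs₀pos⟩ := (hω.and (mIoi_ae_pos α)).exists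
    have hvol : volume ({u | f (ω, u) ≠ f (ω, s₀)} ∩ Set.Ioi 0) = 0 := by
      have hB : volume ({t | f (ω, t * s₀) ≠ f (ω, s₀)} ∩ Set.Ioi 0) = 0 :=
        (mIoi_null_iff α _).mp hs₀null
      have hpre : volume ((· * s₀⁻¹) ⁻¹'
          ({t | f (ω, t * s₀) ≠ f (ω, s₀)} ∩ Set.Ioi 0)) = 0 := by
        rw [Real.volume_preimage_mul_right (inv_ne_zero (ne_of_gt hs₀pos)), hB, mul_zero]
      refine measure_mono_null ?_ hpre
      rintro u ⟨hu, hu0⟩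
      refine ⟨?_, mul_pos hu0 (inv_pos.mpr hs₀pos)⟩
      show f (ω, u * s₀⁻¹ * s₀) ≠ f (ω, s₀)
      rwa [inv_mul_cancel_right₀ (ne_of_gt hs₀pos)]
    have hmae : ∀ᵐ s ∂m, f (ω, s) = f (ω, s₀) := by
      rw [ae_iff]
      rw [show {s | ¬ f (ω, s) = f (ω, s₀)} = {s | f (ω, s) ≠ f (ω, s₀)} from rfl]
      rw [hm, mIoi_null_iff]
      exact hvol
    refine ⟨F (ω, s₀), ?_, ?_⟩
    · have hres : ∀ᵐ u ∂(volume.restrict (Set.Ioc (1:ℝ) 2)), f (ω, u) = f (ω, s₀) := by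
        rw [ae_iff, Measure.restrict_apply' measurableSet_Ioc]
        refine measure_mono_null ?_ hvol
        rintro u ⟨hu, hu2⟩
        exact ⟨hu, lt_trans one_pos hu2.1⟩
      calc g ω = ∫ _ in Set.Ioc (1:ℝ) 2, f (ω, s₀) := integral_congr_ae hres
        _ = (volume (Set.Ioc (1:ℝ) 2)).toReal • f (ω, s₀) := by
            rw [setIntegral_const]
            rfl
        _ = h (F (ω, s₀)) := by
            rw [Real.volume_Ioc]
            norm_num
            rfl
    · filter_upwards [hmae] with s hs
      exact hinj hs
  -- define φ
  set φ : Ω₁ → Ω₂ := fun ω =>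
    if hr : ∃ y, h y = g ω then hr.choose else Classical.arbitrary Ω₂ with hφ
  have hφval : ∀ ω y, g ω = h y → φ ω = y := by
    intro ω y hy
    have hr : ∃ y', h y' = g ω := ⟨y, hy.symm⟩
    simp only [hφ, dif_pos hr]
    exact hinj (hr.choose_spec.trans hy)
  have hφm : Measurable φ := by
    refine mh.measurable_comp_iff.mp ?_
    have hcomp : h ∘ φ = fun ω =>
        if g ω ∈ Set.range h then g ω else h (Classical.arbitrary Ω₂) := by
      funext ω
      by_cases hr : ∃ y, h y = g ω
      · simp only [Function.comp_apply, hφ, dif_pos hr, hr.choose_spec,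
          if_pos (Set.mem_range.mpr hr)]
      · simp only [Function.comp_apply, hφ, dif_neg hr,
          if_neg (fun hc => hr (Set.mem_range.mp hc))]
    rw [hcomp]
    exact Measurable.ite (hgm mh.measurableSet_range) hgm measurable_const
  have hae : (fun p : Ω₁ × ℝ => (Φ p).1) =ᵐ[P] fun p => φ p.1 := by
    have hW : MeasurableSet {p : Ω₁ × ℝ | h (F p) = h (φ p.1)} :=
      msEqR (hmeas.comp hFm) (hmeas.comp (hφm.comp measurable_fst))
    have hW0 : P {p : Ω₁ × ℝ | h (F p) ≠ h (φ p.1)} = 0 := by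
      rw [show {p : Ω₁ × ℝ | h (F p) ≠ h (φ p.1)} = {p : Ω₁ × ℝ | h (F p) = h (φ p.1)}ᶜ from rfl,
        hP, Measure.measure_prod_null hW.compl]
      filter_upwards [main] with ω hy
      obtain ⟨y, hgy, hy⟩ := hy
      have hφω : φ ω = y := hφval ω y hgy
      simp only [Pi.zero_apply]
      refine measure_mono_null (fun s hs => ?_) (ae_iff.mp hy)
      intro hFy
      apply hs
      show h (F (ω, s)) = h (φ ω)
      rw [hFy, hφω]
    refine ae_iff.mpr (measure_mono_null (fun p hp => ?_) hW0)
    exact fun hc => hp (hinj hc)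
  -- pushforward identification
  have hFmap : Measure.map F P = (m Set.univ) • μ₂ := by
    have hfc : F = Prod.fst ∘ Φ := rfl
    rw [hfc, ← Measure.map_map measurable_fst hΦm, hP, hm, hΦmap, Measure.map_fst_prod]
  have hφmap : Measure.map (fun p : Ω₁ × ℝ => φ p.1) P
      = (m Set.univ) • Measure.map φ μ₁ := by
    have hfc : (fun p : Ω₁ × ℝ => φ p.1) = φ ∘ Prod.fst := rfl
    rw [hfc, ← Measure.map_map hφm measurable_fst, hP, Measure.map_fst_prod,
      Measure.map_smul]
  have heq : (m Set.univ) • μ₂ = (m Set.univ) • Measure.map φ μ₁ := by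
    rw [← hFmap, ← hφmap]
    exact Measure.map_congr hae
  have hcancel : ∀ s : Set Ω₂, μ₂ s = 0 ↔ Measure.map φ μ₁ s = 0 := by
    intro s
    have h1 := congrArg (fun ν : Measure Ω₂ => ν s) heq
    simp only [Measure.smul_apply, smul_eq_mul] at h1
    have hne : m Set.univ ≠ 0 := mIoi_univ_ne_zero α
    constructor
    · intro h0
      rcases mul_eq_zero.mp (h1.symm.trans (by rw [h0, mul_zero])) with hc | hc
      · exact absurd hc hne
      · exact hc
    · intro h0
      rcases mul_eq_zero.mp (h1.trans (by rw [h0, mul_zero])) with hc | hc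
      · exact absurd hc hne
      · exact hc
  exact ⟨φ, hφm,
    Measure.AbsolutelyContinuous.mk (fun s _ h0 => (hcancel s).mp h0),
    Measure.AbsolutelyContinuous.mk (fun s _ h0 => (hcancel s).mpr h0), hae⟩

lemma meas_congr_conull {X : Type*} [MeasurableSpace X] {μ : Measure X} {A S T : Set X}
    (hA : μ Aᶜ = 0) (h : S ∩ A = T ∩ A) : μ S = μ T := by
  have h1 : ∀ U : Set X, μ U = μ (U ∩ A) := by
    intro U
    refine le_antisymm ?_ (measure_mono Set.inter_subset_left)
    calc μ U ≤ μ ((U ∩ A) ∪ Aᶜ) := measure_mono (fun x hx => by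
            by_cases hxA : x ∈ A
            · exact Or.inl ⟨hx, hxA⟩
            · exact Or.inr hxA)
      _ ≤ μ (U ∩ A) + μ Aᶜ := measure_union_le _ _
      _ = μ (U ∩ A) := by rw [hA, add_zero]
  rw [h1 S, h1 T, h]

lemma wgt_pos {Ω : Type*} [MeasurableSpace Ω] (T : Ω ≃ᵐ Ω) (μ : Measure Ω) [SigmaFinite μ]
    (hT : Nonsingular T μ) : ∀ᵐ ω ∂μ, 0 < wgt T μ ω := by
  set ν : Measure Ω := Measure.map (⇑T.symm) μ with hν
  have hid : Measure.map (⇑T.symm) (Measure.map (⇑T) μ) = μ := by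
    rw [Measure.map_map T.symm.measurable T.measurable, MeasurableEquiv.symm_comp_self,
      Measure.map_id]
  have h1 : ν ≪ μ := by
    have := hT.2.map T.symm.measurable
    rwa [hid] at this
  have h2 : μ ≪ ν := by
    have := hT.1.map T.symm.measurable
    rwa [hid] at this
  haveI : SigmaFinite ν := T.symm.sigmaFinite_map
  have hpos : ∀ᵐ x ∂ν, 0 < ν.rnDeriv μ x := Measure.rnDeriv_pos h1
  have hpos' : ∀ᵐ x ∂μ, 0 < ν.rnDeriv μ x := h2.ae_le hpos
  have hlt : ∀ᵐ x ∂μ, ν.rnDeriv μ x < ⊤ := Measure.rnDeriv_lt_top ν μ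
  filter_upwards [hpos', hlt] with ω h3 h4
  exact ENNReal.toReal_pos (ne_of_gt h3) (ne_of_lt h4)

end MahAux

open MahAux in
/-- a factor map between two multiplicative Maharam extensions commuting with
the multiplication flows descends to a non-singular factor map between the base systems;
if the map is an a.e. bijection, the induced map is a non-singular isomorphism. -/
theorem maharam_factor_descends
    {Ω₁ Ω₂ : Type*} [MeasurableSpace Ω₁] [StandardBorelSpace Ω₁]
    [MeasurableSpace Ω₂] [StandardBorelSpace Ω₂]
    (α : ℝ) (hα : 0 < α) (hα2 : α < 2)
    (μ₁ : Measure Ω₁) [SigmaFinite μ₁] (μ₂ : Measure Ω₂) [SigmaFinite μ₂]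
    (T₁ : Ω₁ ≃ᵐ Ω₁) (hT₁ : Nonsingular T₁ μ₁)
    (T₂ : Ω₂ ≃ᵐ Ω₂) (hT₂ : Nonsingular T₂ μ₂)
    (Φ : Ω₁ × ℝ → Ω₂ × ℝ) (hΦm : Measurable Φ)
    (hΦmap : Measure.map Φ (μ₁.prod (mIoi α)) = μ₂.prod (mIoi α))
    (hΦconj : ∀ᵐ p ∂(μ₁.prod (mIoi α)), Φ (Mah α T₁ μ₁ p) = Mah α T₂ μ₂ (Φ p))
    (hΦflow : ∀ t : ℝ, 0 < t → ∀ᵐ p ∂(μ₁.prod (mIoi α)),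
      Φ (p.1, t * p.2) = ((Φ p).1, t * (Φ p).2)) :
    ∃ φ : Ω₁ → Ω₂, Measurable φ ∧
      Measure.map φ μ₁ ≪ μ₂ ∧ μ₂ ≪ Measure.map φ μ₁ ∧
      (∀ᵐ ω ∂μ₁, φ (T₁ ω) = T₂ (φ ω)) ∧
      (AEBij (μ₁.prod (mIoi α)) (μ₂.prod (mIoi α)) Φ → AEBij μ₁ μ₂ φ) := by
    classical
  by_cases hE : Nonempty Ω₂
  case neg =>
    haveI : IsEmpty Ω₂ := not_nonempty_iff.mp hE
    haveI : IsEmpty Ω₁ := ⟨fun ω => IsEmpty.false (Φ (ω, 0)).1⟩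
    have hμ₁ : μ₁ = 0 := μ₁.eq_zero_of_isEmpty
    have hμ₂ : μ₂ = 0 := μ₂.eq_zero_of_isEmpty
    refine ⟨fun ω => isEmptyElim ω, measurable_of_empty _, ?_, ?_, ?_, ?_⟩
    · rw [hμ₁]
      simp only [Measure.map_zero]
      exact Measure.AbsolutelyContinuous.zero _
    · rw [hμ₂]
      exact Measure.AbsolutelyContinuous.zero _
    · rw [hμ₁]
      simp
    · intro _
      exact ⟨∅, ∅, fun y => isEmptyElim y, MeasurableSet.empty, MeasurableSet.empty,
        by simp [hμ₁], by simp [hμ₂], measurable_of_empty _,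
        by simp, by simp, by simp, by simp⟩
  haveI := hE
  obtain ⟨φ, hφm, hac1, hac2, hae⟩ := descend α μ₁ μ₂ Φ hΦm hΦmap hΦflow
  refine ⟨φ, hφm, hac1, hac2, ?_, ?_⟩
  · -- conjugation descends
    have hwpos : ∀ᵐ ω ∂μ₁, 0 < wgt T₁ μ₁ ω := wgt_pos T₁ μ₁ hT₁
    have hcpos : ∀ᵐ ω ∂μ₁, 0 < (wgt T₁ μ₁ ω) ^ (1/α) :=
      hwpos.mono fun ω h => Real.rpow_pos_of_pos h _
    have hcm : Measurable fun ω => (wgt T₁ μ₁ ω) ^ (1/α) :=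
      (Real.continuous_rpow_const (by positivity)).measurable.comp
        ((Measure.measurable_rnDeriv _ _).ennreal_toReal)
    have hN : (μ₁.prod (mIoi α)) {p : Ω₁ × ℝ | (Φ p).1 ≠ φ p.1} = 0 := ae_iff.mp hae
    have hMN : (μ₁.prod (mIoi α)) ((fun p : Ω₁ × ℝ =>
        (T₁ p.1, p.2 * (wgt T₁ μ₁ p.1) ^ (1/α))) ⁻¹' {p : Ω₁ × ℝ | (Φ p).1 ≠ φ p.1}) = 0 := by
      refine prod_null_preimage α μ₁ T₁.measurable (fun Z hZm hZ0 => ?_) hcm hcpos hN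
      have hmap0 := hT₁.1 hZ0
      rwa [Measure.map_apply T₁.measurable hZm] at hmap0
    have hMah : ∀ᵐ p ∂(μ₁.prod (mIoi α)), φ (T₁ p.1) = T₂ (φ p.1) := by
      have hMN' : ∀ᵐ p ∂(μ₁.prod (mIoi α)), (Φ (Mah α T₁ μ₁ p)).1 = φ (T₁ p.1) := by
        rw [ae_iff]
        exact hMN
      filter_upwards [hΦconj, hae, hMN'] with p h1 h2 h3
      calc φ (T₁ p.1) = (Φ (Mah α T₁ μ₁ p)).1 := h3.symm
        _ = (Mah α T₂ μ₂ (Φ p)).1 := by rw [h1]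
        _ = T₂ (Φ p).1 := rfl
        _ = T₂ (φ p.1) := by rw [h2]
    exact ae_fst_of_ae_prod hMah
  · -- a.e. bijectivity descends
    rintro ⟨A, B, Ψ, hAm, hBm, hA0, hB0, hΨm, hAB, hBA, hΨΦ, hΦΨ⟩
    haveI : Nonempty Ω₁ := ⟨(Ψ (Classical.arbitrary Ω₂, 0)).1⟩
    have hΨmap : Measure.map Ψ (μ₂.prod (mIoi α)) = μ₁.prod (mIoi α) := by
      ext C hC
      rw [Measure.map_apply hΨm hC, ← hΦmap, Measure.map_apply hΦm (hΨm hC)]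
      refine meas_congr_conull hA0 ?_
      ext x
      simp only [Set.mem_inter_iff, Set.mem_preimage]
      constructor
      · rintro ⟨hxC, hxA⟩
        rw [hΨΦ x hxA] at hxC
        exact ⟨hxC, hxA⟩
      · rintro ⟨hxC, hxA⟩
        rw [hΨΦ x hxA]
        exact ⟨hxC, hxA⟩
    have hAc : ∀ᵐ x ∂(μ₁.prod (mIoi α)), x ∈ A := by
      rw [ae_iff]
      exact hA0
    have hBc : ∀ᵐ y ∂(μ₂.prod (mIoi α)), y ∈ B := by
      rw [ae_iff]
      exact hB0
    have hΨflow : ∀ t : ℝ, 0 < t → ∀ᵐ y ∂(μ₂.prod (mIoi α)),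
        Ψ (y.1, t * y.2) = ((Ψ y).1, t * (Ψ y).2) := by
      intro t ht
      have hset : MeasurableSet {y : Ω₂ × ℝ | Ψ (y.1, t * y.2) = ((Ψ y).1, t * (Ψ y).2)} :=
        msEq (hΨm.comp (measurable_fst.prodMk (measurable_snd.const_mul t)))
          ((measurable_fst.comp hΨm).prodMk ((measurable_snd.comp hΨm).const_mul t))
      rw [← hΦmap, ae_map_iff hΦm.aemeasurable hset]
      have hflA : (μ₁.prod (mIoi α)) ((fun p : Ω₁ × ℝ => (p.1, t * p.2)) ⁻¹' Aᶜ) = 0 := by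
        have hrw : (fun p : Ω₁ × ℝ => (p.1, t * p.2))
            = fun p : Ω₁ × ℝ => (id p.1, p.2 * (fun _ : Ω₁ => t) p.1) := by
          funext p
          simp [mul_comm]
        rw [hrw]
        exact prod_null_preimage α μ₁ measurable_id (fun Z _ h => h) measurable_const
          (ae_of_all _ fun _ => ht) hA0
      have hflA' : ∀ᵐ x ∂(μ₁.prod (mIoi α)), (x.1, t * x.2) ∈ A := by
        rw [ae_iff]
        exact hflA
      filter_upwards [hAc, hΦflow t ht, hflA'] with x hx hfl hxt
      have h1 : Ψ (Φ x) = x := hΨΦ x hx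
      have h2 : Ψ (Φ (x.1, t * x.2)) = (x.1, t * x.2) := hΨΦ _ hxt
      rw [← hfl, h2, h1]
    obtain ⟨ψ, hψm, hψac1, hψac2, hψae⟩ := descend α μ₂ μ₁ Ψ hΨm hΨmap hΨflow
    have hψφ : ∀ᵐ ω ∂μ₁, ψ (φ ω) = ω := by
      have hNψ : (μ₂.prod (mIoi α)) {y : Ω₂ × ℝ | (Ψ y).1 ≠ ψ y.1} = 0 := ae_iff.mp hψae
      obtain ⟨N₂, hN₂sub, hN₂m, hN₂0⟩ := exists_measurable_superset_of_null hNψ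
      have hpull : (μ₁.prod (mIoi α)) (Φ ⁻¹' N₂) = 0 := by
        rw [← Measure.map_apply hΦm hN₂m, hΦmap]
        exact hN₂0
      refine ae_fst_of_ae_prod (μ := μ₁) (α := α) ?_
      filter_upwards [hae, hAc,
        ae_iff.mpr (measure_mono_null (fun x hx => not_not.mp hx) hpull :
          (μ₁.prod (mIoi α)) {x : Ω₁ × ℝ | ¬ Φ x ∉ N₂} = 0)] with x h2 hx hn
      have h3 : (Ψ (Φ x)).1 = ψ ((Φ x).1) := by
        by_contra hc
        exact hn (hN₂sub hc)
      calc ψ (φ x.1) = ψ ((Φ x).1) := by rw [← h2]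
        _ = (Ψ (Φ x)).1 := h3.symm
        _ = x.1 := by rw [hΨΦ x hx]
    have hφψ : ∀ᵐ y ∂μ₂, φ (ψ y) = y := by
      have hNφ : (μ₁.prod (mIoi α)) {x : Ω₁ × ℝ | (Φ x).1 ≠ φ x.1} = 0 := ae_iff.mp hae
      obtain ⟨N₁, hN₁sub, hN₁m, hN₁0⟩ := exists_measurable_superset_of_null hNφ
      have hpull : (μ₂.prod (mIoi α)) (Ψ ⁻¹' N₁) = 0 := by
        rw [← Measure.map_apply hΨm hN₁m, hΨmap]
        exact hN₁0
      refine ae_fst_of_ae_prod (μ := μ₂) (α := α) ?_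
      filter_upwards [hψae, hBc,
        ae_iff.mpr (measure_mono_null (fun y hy => not_not.mp hy) hpull :
          (μ₂.prod (mIoi α)) {y : Ω₂ × ℝ | ¬ Ψ y ∉ N₁} = 0)] with y h2 hy hn
      have h3 : (Φ (Ψ y)).1 = φ ((Ψ y).1) := by
        by_contra hc
        exact hn (hN₁sub hc)
      calc φ (ψ y.1) = φ ((Ψ y).1) := by rw [← h2]
        _ = (Φ (Ψ y)).1 := h3.symm
        _ = y.1 := by rw [hΦΨ y hy]
    set A₁ : Set Ω₁ := {ω | ψ (φ ω) = ω} with hA₁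
    set B₁ : Set Ω₂ := {y | φ (ψ y) = y} with hB₁
    have hA₁m : MeasurableSet A₁ := msEq (hψm.comp hφm) measurable_id
    have hB₁m : MeasurableSet B₁ := msEq (hφm.comp hψm) measurable_id
    have hA₁0 : μ₁ A₁ᶜ = 0 := ae_iff.mp hψφ
    have hB₁0 : μ₂ B₁ᶜ = 0 := ae_iff.mp hφψ
    refine ⟨A₁ ∩ φ ⁻¹' B₁, B₁ ∩ ψ ⁻¹' A₁, ψ, hA₁m.inter (hφm hB₁m), hB₁m.inter (hψm hA₁m),
      ?_, ?_, hψm, ?_, ?_, ?_, ?_⟩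
    · rw [Set.compl_inter]
      refine measure_union_null hA₁0 ?_
      have hpre : μ₁ (φ ⁻¹' B₁ᶜ) = 0 := by
        rw [← Measure.map_apply hφm hB₁m.compl]
        exact hac1 hB₁0
      simpa [Set.preimage_compl] using hpre
    · rw [Set.compl_inter]
      refine measure_union_null hB₁0 ?_
      have hpre : μ₂ (ψ ⁻¹' A₁ᶜ) = 0 := by
        rw [← Measure.map_apply hψm hA₁m.compl]
        exact hψac1 hA₁0
      simpa [Set.preimage_compl] using hpre
    · rintro x ⟨hx1, hx2⟩
      refine ⟨hx2, ?_⟩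
      simp only [Set.mem_preimage]
      have hx1' : ψ (φ x) = x := hx1
      rw [hA₁]
      simp only [Set.mem_setOf_eq]
      rw [hx1']
      exact hx1'
    · rintro y ⟨hy1, hy2⟩
      refine ⟨hy2, ?_⟩
      simp only [Set.mem_preimage]
      have hy1' : φ (ψ y) = y := hy1
      rw [hB₁]
      simp only [Set.mem_setOf_eq]
      rw [hy1']
      exact hy1'
    · rintro x ⟨hx1, _⟩
      exact hx1
    · rintro y ⟨hy1, _⟩
      exact hy1
end
end
end

section
/- Let Q be a σ-finite measure on ℝ^ℤ invariant under the left shift S. Then Q is ergodic for S (every S-invariant measurable set is either Q-null or has Q-null complement) if and only if for every decomposition Q = Q₁ + Q₂ into two σ-finite S-invariant measures Q₁, Q₂ there exists a constant c ∈ [0, 1] such that Q₁ = c · Q and Q₂ = (1 − c) · Q. -/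
open MeasureTheory Filter Set
open scoped ENNReal

noncomputable section

noncomputable section

lemma measurable_shiftZ : Measurable shiftZ :=
  measurable_pi_lambda _ fun _ => measurable_pi_apply _

/-- The shift as a measurable equivalence. -/
def shiftEquivZ : (ℤ → ℝ) ≃ᵐ (ℤ → ℝ) where
  toFun := shiftZ
  invFun := fun x n => x (n - 1)
  left_inv := fun x => funext fun n => by simp [shiftZ]
  right_inv := fun x => funext fun n => by simp [shiftZ]
  measurable_toFun := measurable_shiftZ
  measurable_invFun := measurable_pi_lambda _ fun _ => measurable_pi_apply _

lemma exists_const_smul_of_invariant (Q Q₁ : Measure (ℤ → ℝ)) [SigmaFinite Q] [SigmaFinite Q₁]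
    (hinv : Measure.map shiftZ Q = Q) (hinv1 : Measure.map shiftZ Q₁ = Q₁)
    (hle : Q₁ ≤ Q)
    (herg : ∀ A : Set (ℤ → ℝ), MeasurableSet A → shiftZ ⁻¹' A = A → Q A = 0 ∨ Q Aᶜ = 0) :
    ∃ c : ℝ≥0∞, Q₁ = c • Q := by
  have hQ1Q : Q₁ ≪ Q := Measure.absolutelyContinuous_of_le hle
  have herg' : Ergodic shiftZ Q := by
    refine ⟨⟨measurable_shiftZ, hinv⟩, ⟨fun s hs hfs => ?_⟩⟩
    rw [Filter.eventuallyConst_set']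
    rcases herg s hs hfs with h | h
    · exact Or.inl (ae_eq_empty.2 h)
    · exact Or.inr (ae_eq_univ.2 h)
  have hemb : MeasurableEmbedding shiftZ := shiftEquivZ.measurableEmbedding
  have hae : (fun x => Q₁.rnDeriv Q (shiftZ x)) =ᵐ[Q] Q₁.rnDeriv Q := by
    have := hemb.rnDeriv_map Q₁ Q
    rwa [hinv, hinv1] at this
  obtain ⟨c, hc⟩ := herg'.ae_eq_const_of_ae_eq_comp₀
    (Measure.measurable_rnDeriv Q₁ Q).nullMeasurable hae
  refine ⟨c, ?_⟩
  have h1 : Q.withDensity (Q₁.rnDeriv Q) = Q₁ := Measure.withDensity_rnDeriv_eq Q₁ Q hQ1Q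
  rw [← h1, withDensity_congr_ae hc]
  exact withDensity_const c

/-- a σ-finite shift-invariant measure `Q` on `ℝ^ℤ` is ergodic iff the only
decompositions `Q = Q₁ + Q₂` into σ-finite shift-invariant measures are the trivial ones
`Q₁ = c·Q`, `Q₂ = (1−c)·Q` with `c ∈ [0,1]`. -/
theorem ergodic_iff_pure_decomposition
    (Q : Measure (ℤ → ℝ)) [SigmaFinite Q] (hinv : Measure.map shiftZ Q = Q) :
    (∀ A : Set (ℤ → ℝ), MeasurableSet A → shiftZ ⁻¹' A = A → Q A = 0 ∨ Q Aᶜ = 0) ↔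
    (∀ Q₁ Q₂ : Measure (ℤ → ℝ), SigmaFinite Q₁ → SigmaFinite Q₂ →
      Measure.map shiftZ Q₁ = Q₁ → Measure.map shiftZ Q₂ = Q₂ → Q = Q₁ + Q₂ →
      ∃ c : ℝ≥0∞, c ≤ 1 ∧ Q₁ = c • Q ∧ Q₂ = (1 - c) • Q) := by
  constructor
  · intro herg Q₁ Q₂ h1 h2 hi1 hi2 hsum
    have hle1 : Q₁ ≤ Q := hsum ▸ Measure.le_add_right le_rfl
    have hle2 : Q₂ ≤ Q := hsum ▸ Measure.le_add_left le_rfl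
    obtain ⟨c₁, hc₁⟩ := exists_const_smul_of_invariant Q Q₁ hinv hi1 hle1 herg
    obtain ⟨c₂, hc₂⟩ := exists_const_smul_of_invariant Q Q₂ hinv hi2 hle2 herg
    by_cases hQ : Q = 0
    · refine ⟨0, zero_le_one, ?_, ?_⟩ <;>
        simp only [hQ, smul_zero] <;>
        [exact le_antisymm (hQ ▸ hle1) (Measure.zero_le _);
         exact le_antisymm (hQ ▸ hle2) (Measure.zero_le _)]
    · -- find a set of positive finite measure
      obtain ⟨n, hn⟩ : ∃ n, Q (spanningSets Q n) ≠ 0 := by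
        by_contra h
        push_neg at h
        apply hQ
        ext s hs
        have : Q s ≤ Q (⋃ n, spanningSets Q n) := by
          rw [iUnion_spanningSets]; exact measure_mono (subset_univ s)
        rw [measure_iUnion_null h] at this
        simpa using le_antisymm this (zero_le)
      set s := spanningSets Q n with hs_def
      have hs0 : Q s ≠ 0 := hn
      have hsfin : Q s ≠ ∞ := (measure_spanningSets_lt_top Q n).ne
      have heval : c₁ * Q s + c₂ * Q s = Q s := by
        have : Q s = Q₁ s + Q₂ s := by rw [hsum]; rfl
        rw [hc₁, hc₂] at this
        simpa [Measure.smul_apply, smul_eq_mul] using this.symm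
      have hsum_c : c₁ + c₂ = 1 := by
        have : (c₁ + c₂) * Q s = 1 * Q s := by rw [add_mul, one_mul, heval]
        exact (ENNReal.mul_left_inj hs0 hsfin).1 this
      have hc₁le : c₁ ≤ 1 := by
        calc c₁ ≤ c₁ + c₂ := le_self_add
        _ = 1 := hsum_c
      have hc₂eq : c₂ = 1 - c₁ := by
        refine ENNReal.eq_sub_of_add_eq (by
          intro h; rw [h] at hc₁le; exact (not_le.2 ENNReal.one_lt_top) hc₁le) ?_
        rw [add_comm]; exact hsum_c
      exact ⟨c₁, hc₁le, hc₁, hc₂eq ▸ hc₂⟩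
  · intro hpure A hA hAinv
    by_contra h
    push_neg at h
    obtain ⟨hA0, hAc0⟩ := h
    set Q₁ := Q.restrict A with hQ₁
    set Q₂ := Q.restrict Aᶜ with hQ₂
    have hrest_inv : ∀ (B : Set (ℤ → ℝ)), MeasurableSet B → shiftZ ⁻¹' B = B →
        Measure.map shiftZ (Q.restrict B) = Q.restrict B := by
      intro B hB hBinv
      ext t ht
      rw [Measure.map_apply measurable_shiftZ ht, Measure.restrict_apply ht,
        Measure.restrict_apply (measurable_shiftZ ht)]
      have : shiftZ ⁻¹' t ∩ B = shiftZ ⁻¹' (t ∩ B) := by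
        rw [preimage_inter, hBinv]
      rw [this, ← Measure.map_apply measurable_shiftZ (ht.inter hB), hinv]
    have hAcinv : shiftZ ⁻¹' Aᶜ = Aᶜ := by rw [preimage_compl, hAinv]
    obtain ⟨c, _, hc1, _⟩ := hpure Q₁ Q₂ (Restrict.sigmaFinite Q A) (Restrict.sigmaFinite Q Aᶜ)
      (hrest_inv A hA hAinv) (hrest_inv Aᶜ hA.compl hAcinv)
      (Measure.restrict_add_restrict_compl hA).symm
    have h1 : Q₁ Aᶜ = 0 := by
      rw [hQ₁, Measure.restrict_apply hA.compl]
      simp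
    have h2 : Q₁ A = Q A := by rw [hQ₁, Measure.restrict_apply hA, inter_self]
    rw [hc1] at h1 h2
    simp only [Measure.smul_apply, smul_eq_mul] at h1 h2
    rcases mul_eq_zero.1 h1 with hc0 | hq
    · rw [hc0, zero_mul] at h2; exact hA0 h2.symm
    · exact hAc0 hq
end
end
end

section
/- Let 0 < α < 2 and let T be a non-singular automorphism of a σ-finite measure space (Ω, ℱ, μ), with multiplicative Maharam extension T̃_α on Ω × (0,∞) equipped with the measure m = μ ⊗ s^{-(1+α)}ds. Then for every nonnegative f ∈ L²(μ), every nonnegative g ∈ L²((0,∞), s^{-(1+α)}ds), and every n ≥ 1, ⟨(f ⊗ g) ∘ T̃_α^n, f ⊗ g⟩_{L²(m)} ≤ ‖g‖²_{L²(s^{-(1+α)}ds)} · ⟨U_T^n f, f⟩_{L²(μ)}, where (f ⊗ g)(ω, s) = f(ω)g(s). -/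
open MeasureTheory Filter Set
open scoped ENNReal

noncomputable section

noncomputable section

section AuxMaharam

open Function MeasureTheory Measure

variable {Ω : Type*} [MeasurableSpace Ω]

lemma wgt_measurable (T : Ω ≃ᵐ Ω) (μ : Measure Ω) : Measurable (wgt T μ) :=
  (Measure.measurable_rnDeriv _ _).ennreal_toReal

lemma wgt_nonneg (T : Ω ≃ᵐ Ω) (μ : Measure Ω) (ω : Ω) : 0 ≤ wgt T μ ω :=
  ENNReal.toReal_nonneg

lemma wgtn_nonneg (T : Ω ≃ᵐ Ω) (μ : Measure Ω) (n : ℕ) (ω : Ω) : 0 ≤ wgtn T μ n ω :=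
  ENNReal.toReal_nonneg

lemma Mah_measurable (α : ℝ) (T : Ω ≃ᵐ Ω) (μ : Measure Ω) : Measurable (Mah α T μ) := by
  apply Measurable.prod
  · exact T.measurable.comp measurable_fst
  · exact measurable_snd.mul
      (((wgt_measurable T μ).comp measurable_fst).pow_const (1/α))

lemma Mah_iterate (α : ℝ) (T : Ω ≃ᵐ Ω) (μ : Measure Ω) (n : ℕ) (p : Ω × ℝ) :
    (Mah α T μ)^[n] p =
      ((⇑T)^[n] p.1, p.2 * ∏ k ∈ Finset.range n, wgt T μ ((⇑T)^[k] p.1) ^ (1/α)) := by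
  induction n with
  | zero => simp
  | succ n ih =>
      rw [Function.iterate_succ_apply', ih, Function.iterate_succ_apply']
      simp only [Mah, Finset.prod_range_succ, ← mul_assoc]

/-- The `n`-th iterate of `T.symm` as a measurable equiv. -/
def iterSymm (T : Ω ≃ᵐ Ω) : ℕ → (Ω ≃ᵐ Ω)
  | 0 => MeasurableEquiv.refl Ω
  | (n+1) => (iterSymm T n).trans T.symm

lemma iterSymm_coe (T : Ω ≃ᵐ Ω) (n : ℕ) : ⇑(iterSymm T n) = (⇑T.symm)^[n] := by
  induction n with
  | zero => rfl
  | succ n ih =>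
      funext x
      rw [Function.iterate_succ_apply']
      show T.symm (iterSymm T n x) = _
      rw [ih]

lemma iter_symm_iter (T : Ω ≃ᵐ Ω) (n : ℕ) (x : Ω) : (⇑T.symm)^[n] ((⇑T)^[n] x) = x :=
  (Function.LeftInverse.iterate T.symm_apply_apply n) x

lemma iter_iter_symm (T : Ω ≃ᵐ Ω) (n : ℕ) (x : Ω) : (⇑T)^[n] ((⇑T.symm)^[n] x) = x :=
  (Function.LeftInverse.iterate T.apply_symm_apply n) x

lemma iterSymm_symm_coe (T : Ω ≃ᵐ Ω) (n : ℕ) : ⇑(iterSymm T n).symm = (⇑T)^[n] := by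
  funext x
  apply (iterSymm T n).injective
  rw [MeasurableEquiv.apply_symm_apply, iterSymm_coe, iter_symm_iter]

variable {μ : Measure Ω} {T : Ω ≃ᵐ Ω}

lemma symm_comp_self (T : Ω ≃ᵐ Ω) : ⇑T.symm ∘ ⇑T = id :=
  funext fun x => T.symm_apply_apply x

lemma map_symm_ac (hT : Nonsingular T μ) : μ.map ⇑T.symm ≪ μ := by
  have h := hT.2.map T.symm.measurable
  rwa [Measure.map_map T.symm.measurable T.measurable, symm_comp_self, Measure.map_id] at h

lemma ac_map_symm (hT : Nonsingular T μ) : μ ≪ μ.map ⇑T.symm := by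
  have h := hT.1.map T.symm.measurable
  rwa [Measure.map_map T.symm.measurable T.measurable, symm_comp_self, Measure.map_id] at h

lemma map_iter_ac (hT : Nonsingular T μ) (k : ℕ) : μ.map ((⇑T)^[k]) ≪ μ := by
  induction k with
  | zero =>
      simp only [Function.iterate_zero, Measure.map_id]
      exact Measure.AbsolutelyContinuous.rfl
  | succ k ih =>
      rw [Function.iterate_succ']
      rw [← Measure.map_map T.measurable (T.measurable.iterate k)]
      exact (ih.map T.measurable).trans hT.1

lemma map_symm_iter_ac (hT : Nonsingular T μ) (k : ℕ) : μ.map ((⇑T.symm)^[k]) ≪ μ := by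
  induction k with
  | zero =>
      simp only [Function.iterate_zero, Measure.map_id]
      exact Measure.AbsolutelyContinuous.rfl
  | succ k ih =>
      rw [Function.iterate_succ']
      rw [← Measure.map_map T.symm.measurable (T.symm.measurable.iterate k)]
      exact (ih.map T.symm.measurable).trans (map_symm_ac hT)

end AuxMaharam

section AuxMaharam2

open Function MeasureTheory Measure

variable {Ω : Type*} [MeasurableSpace Ω] {μ : Measure Ω} {T : Ω ≃ᵐ Ω}

lemma map_withDensity_equiv (μ : Measure Ω) (e : Ω ≃ᵐ Ω) {d : Ω → ℝ≥0∞} (hd : Measurable d) :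
    (μ.withDensity d).map e = (μ.map e).withDensity (d ∘ ⇑e.symm) := by
  ext s hs
  rw [Measure.map_apply e.measurable hs, withDensity_apply _ (e.measurable hs),
    withDensity_apply _ hs, setLIntegral_map hs (hd.comp e.symm.measurable) e.measurable]
  exact lintegral_congr fun x => by simp

lemma rnDeriv_succ [SigmaFinite μ] (hT : Nonsingular T μ) (k : ℕ) :
    (μ.map ((⇑T.symm)^[k+1])).rnDeriv μ
      =ᵐ[μ] fun ω => (μ.map ((⇑T.symm)^[k])).rnDeriv μ ω
          * (μ.map ⇑T.symm).rnDeriv μ ((⇑T)^[k] ω) := by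
  haveI : SigmaFinite (μ.map ⇑T.symm) := T.symm.sigmaFinite_map
  haveI : SigmaFinite (μ.map ((⇑T.symm)^[k])) := by
    rw [← iterSymm_coe]; exact (iterSymm T k).sigmaFinite_map
  have hw1 : Measurable ((μ.map ⇑T.symm).rnDeriv μ) := Measure.measurable_rnDeriv _ _
  have hwk : Measurable ((μ.map ((⇑T.symm)^[k])).rnDeriv μ) := Measure.measurable_rnDeriv _ _
  have hmap : μ.map ((⇑T.symm)^[k+1])
      = μ.withDensity (fun ω => (μ.map ((⇑T.symm)^[k])).rnDeriv μ ω
          * (μ.map ⇑T.symm).rnDeriv μ ((⇑T)^[k] ω)) := by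
    calc μ.map ((⇑T.symm)^[k+1])
        = (μ.map ⇑T.symm).map (⇑(iterSymm T k)) := by
          rw [iterSymm_coe, Measure.map_map (T.symm.measurable.iterate k) T.symm.measurable,
            ← Function.iterate_succ]
      _ = (μ.withDensity ((μ.map ⇑T.symm).rnDeriv μ)).map (⇑(iterSymm T k)) := by
          rw [Measure.withDensity_rnDeriv_eq _ _ (map_symm_ac hT)]
      _ = (μ.map ⇑(iterSymm T k)).withDensity
            (((μ.map ⇑T.symm).rnDeriv μ) ∘ ⇑(iterSymm T k).symm) :=
          map_withDensity_equiv _ _ hw1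
      _ = (μ.withDensity ((μ.map ((⇑T.symm)^[k])).rnDeriv μ)).withDensity
            (((μ.map ⇑T.symm).rnDeriv μ) ∘ (⇑T)^[k]) := by
          rw [iterSymm_coe, iterSymm_symm_coe,
            Measure.withDensity_rnDeriv_eq _ _ (map_symm_iter_ac hT k)]
      _ = μ.withDensity (fun ω => (μ.map ((⇑T.symm)^[k])).rnDeriv μ ω
            * (μ.map ⇑T.symm).rnDeriv μ ((⇑T)^[k] ω)) := by
          rw [← withDensity_mul _ hwk (hw1.comp (T.measurable.iterate k))]
          rfl
  nth_rewrite 1 [hmap]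
  exact Measure.rnDeriv_withDensity μ (hwk.mul (hw1.comp (T.measurable.iterate k)))

lemma wgtn_prod [SigmaFinite μ] (hT : Nonsingular T μ) (n : ℕ) :
    wgtn T μ n =ᵐ[μ] fun ω => ∏ k ∈ Finset.range n, wgt T μ ((⇑T)^[k] ω) := by
  induction n with
  | zero =>
      filter_upwards [Measure.rnDeriv_self μ] with ω hω
      simp only [wgtn, Function.iterate_zero, Measure.map_id, hω, ENNReal.toReal_one,
        Finset.range_zero, Finset.prod_empty]
  | succ k ih =>
      filter_upwards [ih, rnDeriv_succ hT k] with ω h1 h2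
      simp only [wgtn] at h1 h2 ⊢
      rw [h2, ENNReal.toReal_mul, Finset.prod_range_succ, h1]
      rfl

lemma wgt_pos [SigmaFinite μ] (hT : Nonsingular T μ) : ∀ᵐ ω ∂μ, 0 < wgt T μ ω := by
  haveI : SigmaFinite (μ.map ⇑T.symm) := T.symm.sigmaFinite_map
  have h1 : ∀ᵐ ω ∂μ, 0 < (μ.map ⇑T.symm).rnDeriv μ ω :=
    Filter.Eventually.filter_mono (ac_map_symm hT).ae_le
      (Measure.rnDeriv_pos (map_symm_ac hT))
  have h2 : ∀ᵐ ω ∂μ, (μ.map ⇑T.symm).rnDeriv μ ω < ⊤ := Measure.rnDeriv_lt_top _ _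
  filter_upwards [h1, h2] with ω a b
  exact ENNReal.toReal_pos a.ne' b.ne

lemma wgt_pos_iter [SigmaFinite μ] (hT : Nonsingular T μ) (k : ℕ) :
    ∀ᵐ ω ∂μ, 0 < wgt T μ ((⇑T)^[k] ω) :=
  ae_of_ae_map (T.measurable.iterate k).aemeasurable
    (Filter.Eventually.filter_mono (map_iter_ac hT k).ae_le (wgt_pos hT))

end AuxMaharam2

section AuxMaharam3

open Function MeasureTheory Measure

lemma mIoi_scale (α : ℝ) {c : ℝ} (hc : 0 < c) {h : ℝ → ℝ≥0∞} (hh : Measurable h) :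
    ∫⁻ s, h (s * c) ∂(mIoi α) = ENNReal.ofReal (c ^ α) * ∫⁻ s, h s ∂(mIoi α) := by
  have hd : Measurable fun s : ℝ => ENNReal.ofReal (s ^ (-(1+α))) :=
    (measurable_id.pow_const (-(1+α))).ennreal_ofReal
  have key : ∀ H : ℝ → ℝ≥0∞, Measurable H →
      ∫⁻ s in Set.Ioi (0:ℝ), H (s * c)
        = ENNReal.ofReal c⁻¹ * ∫⁻ s in Set.Ioi (0:ℝ), H s := by
    intro H hH
    have hpre : (· * c) ⁻¹' Set.Ioi (0:ℝ) = Set.Ioi 0 := by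
      ext x
      simp only [Set.mem_preimage, Set.mem_Ioi]
      exact mul_pos_iff_of_pos_right hc
    have h1 : ∫⁻ s in Set.Ioi (0:ℝ), H (s * c)
        = ∫⁻ y, H y ∂(Measure.map (· * c) (volume.restrict (Set.Ioi (0:ℝ)))) := by
      rw [lintegral_map hH (measurable_mul_const c)]
    have h2 : Measure.map (· * c) (volume.restrict (Set.Ioi (0:ℝ)))
        = ENNReal.ofReal c⁻¹ • (volume.restrict (Set.Ioi (0:ℝ))) := by
      conv_lhs => rw [← hpre]
      rw [← Measure.restrict_map (measurable_mul_const c) measurableSet_Ioi,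
        Real.map_volume_mul_right hc.ne', Measure.restrict_smul, abs_of_pos (inv_pos.mpr hc)]
    rw [h1, h2, lintegral_smul_measure, smul_eq_mul]
  have hcomp : Measurable fun s : ℝ => h (s * c) := hh.comp (measurable_mul_const c)
  rw [mIoi, lintegral_withDensity_eq_lintegral_mul _ hd hcomp,
    lintegral_withDensity_eq_lintegral_mul _ hd hh]
  have congr1 : ∫⁻ s in Set.Ioi (0:ℝ),
        ((fun s => ENNReal.ofReal (s ^ (-(1+α)))) * fun s => h (s * c)) s
      = ∫⁻ s in Set.Ioi (0:ℝ), ENNReal.ofReal (c ^ (1+α)) *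
          ((fun u => ENNReal.ofReal (u ^ (-(1+α))) * h u) (s * c)) := by
    refine setLIntegral_congr_fun measurableSet_Ioi ?_
    intro s hs
    have hs' : (0:ℝ) < s := hs
    simp only [Pi.mul_apply]
    rw [← mul_assoc, ← ENNReal.ofReal_mul (Real.rpow_nonneg hc.le _),
      Real.mul_rpow hs'.le hc.le, ← mul_assoc, mul_comm (c ^ (1+α)), mul_assoc,
      ← Real.rpow_add hc, add_neg_cancel, Real.rpow_zero, mul_one]
  have hHc : Measurable fun s : ℝ =>
      (fun u => ENNReal.ofReal (u ^ (-(1+α))) * h u) (s * c) :=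
    (hd.mul hh).comp (measurable_mul_const c)
  rw [congr1, lintegral_const_mul _ hHc, key (fun u => ENNReal.ofReal (u ^ (-(1+α))) * h u) (hd.mul hh), ← mul_assoc,
    ← ENNReal.ofReal_mul (Real.rpow_nonneg hc.le _)]
  have hce : c ^ (1+α) * c⁻¹ = c ^ α := by
    rw [← Real.rpow_neg_one c, ← Real.rpow_add hc]
    ring_nf
  rw [hce]
  exact congrArg _ (lintegral_congr fun s => rfl)

lemma inner_holder (α : ℝ) {g : ℝ → ℝ} (hgm : Measurable g) {c : ℝ} (hc : 0 < c) :
    ∫⁻ s, ENNReal.ofReal (g (s * c)) * ENNReal.ofReal (g s) ∂(mIoi α)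
      ≤ ENNReal.ofReal (Real.sqrt (c ^ α))
          * ∫⁻ s, ENNReal.ofReal (g s) ^ (2:ℝ) ∂(mIoi α) := by
  set G := ∫⁻ s, ENNReal.ofReal (g s) ^ (2:ℝ) ∂(mIoi α) with hG
  have hpq : Real.HolderConjugate 2 2 := Real.holderConjugate_iff.mpr ⟨one_lt_two, by norm_num⟩
  have hm1 : Measurable fun s => ENNReal.ofReal (g (s * c)) :=
    (hgm.comp (measurable_mul_const c)).ennreal_ofReal
  have hm2 : Measurable fun s => ENNReal.ofReal (g s) := hgm.ennreal_ofReal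
  have hCS := ENNReal.lintegral_mul_le_Lp_mul_Lq (mIoi α) hpq
    hm1.aemeasurable hm2.aemeasurable
  have hscale : ∫⁻ s, ENNReal.ofReal (g (s * c)) ^ (2:ℝ) ∂(mIoi α)
      = ENNReal.ofReal (c ^ α) * G := by
    exact mIoi_scale α hc (hm2.pow_const (2:ℝ))
  calc ∫⁻ s, ENNReal.ofReal (g (s * c)) * ENNReal.ofReal (g s) ∂(mIoi α)
      ≤ (∫⁻ s, ENNReal.ofReal (g (s * c)) ^ (2:ℝ) ∂(mIoi α)) ^ (1/(2:ℝ))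
          * (∫⁻ s, ENNReal.ofReal (g s) ^ (2:ℝ) ∂(mIoi α)) ^ (1/(2:ℝ)) := hCS
    _ = (ENNReal.ofReal (c ^ α)) ^ (1/(2:ℝ)) * (G ^ (1/(2:ℝ)) * G ^ (1/(2:ℝ))) := by
        rw [hscale, ENNReal.mul_rpow_of_nonneg _ _ (by norm_num : (0:ℝ) ≤ 1/2), ← hG,
          mul_assoc]
    _ = ENNReal.ofReal (Real.sqrt (c ^ α)) * G := by
        rw [← ENNReal.rpow_add_of_nonneg _ _ (by norm_num) (by norm_num)]
        norm_num
        rw [ENNReal.ofReal_rpow_of_nonneg (Real.rpow_nonneg hc.le _) (by norm_num),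
          Real.sqrt_eq_rpow]

lemma ofReal_sqrt_rpow_two {x : ℝ} (hx : 0 ≤ x) :
    ENNReal.ofReal (Real.sqrt x) ^ (2:ℝ) = ENNReal.ofReal x := by
  rw [ENNReal.ofReal_rpow_of_nonneg (Real.sqrt_nonneg x) (by norm_num)]
  congr 1
  rw [show (2:ℝ) = ((2:ℕ):ℝ) by norm_num, Real.rpow_natCast, Real.sq_sqrt hx]

lemma ofReal_rpow_two_eq {x : ℝ} (hx : 0 ≤ x) :
    ENNReal.ofReal (x ^ 2) = ENNReal.ofReal x ^ (2:ℝ) := by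
  rw [ENNReal.ofReal_rpow_of_nonneg hx (by norm_num)]
  congr 1
  rw [show (2:ℝ) = ((2:ℕ):ℝ) by norm_num, Real.rpow_natCast]

lemma memLp_two_lintegral_ne_top {X : Type*} [MeasurableSpace X] {ν : MeasureTheory.Measure X}
    {f : X → ℝ} (hf0 : ∀ x, 0 ≤ f x) (hf : MeasureTheory.MemLp f 2 ν) :
    ∫⁻ x, ENNReal.ofReal (f x) ^ (2:ℝ) ∂ν ≠ ⊤ := by
  have h := MeasureTheory.lintegral_rpow_enorm_lt_top_of_eLpNorm_lt_top
    (f := f) (μ := ν) (p := 2) (by norm_num) (by norm_num) hf.2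
  simp only [ENNReal.toReal_ofNat] at h
  refine ne_of_lt (lt_of_le_of_lt (le_of_eq ?_) h)
  exact MeasureTheory.lintegral_congr fun x => by
    rw [← Real.enorm_eq_ofReal (hf0 x)]

end AuxMaharam3

/-- Cauchy–Schwarz estimate for the Maharam extension: for nonnegative
`f ∈ L²(μ)`, `g ∈ L²(s^{-(1+α)}ds)` and `n ≥ 1`,
`⟨(f⊗g) ∘ T̃_α^n, f⊗g⟩ ≤ ‖g‖² ⟨U_T^n f, f⟩`. -/
theorem maharam_inner_product_bound
    {Ω : Type*} [MeasurableSpace Ω] (μ : Measure Ω) [SigmaFinite μ]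
    (α : ℝ) (hα : 0 < α) (hα2 : α < 2)
    (T : Ω ≃ᵐ Ω) (hT : Nonsingular T μ)
    (f : Ω → ℝ) (hfm : Measurable f) (hf0 : ∀ ω, 0 ≤ f ω) (hf2 : MemLp f 2 μ)
    (g : ℝ → ℝ) (hgm : Measurable g) (hg0 : ∀ s, 0 ≤ g s) (hg2 : MemLp g 2 (mIoi α))
    (n : ℕ) (hn : 1 ≤ n) :
    (∫ p, (f ((Mah α T μ)^[n] p).1 * g ((Mah α T μ)^[n] p).2) * (f p.1 * g p.2)
        ∂(μ.prod (mIoi α)))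
      ≤ (∫ s, g s ^ 2 ∂(mIoi α)) *
          ∫ ω, Real.sqrt (wgtn T μ n ω) * f ((⇑T)^[n] ω) * f ω ∂μ := by
  classical
  haveI : SFinite (mIoi α) := by unfold mIoi; infer_instance
  -- notation
  set C : Ω → ℝ := fun x => ∏ k ∈ Finset.range n, wgt T μ ((⇑T)^[k] x) ^ (1/α) with hC
  have hwm : Measurable (wgt T μ) := wgt_measurable T μ
  have hwnm : Measurable (wgtn T μ n) := (Measure.measurable_rnDeriv _ _).ennreal_toReal
  have hCm : Measurable C :=
    Finset.measurable_prod _ fun k _ => ((hwm.comp (T.measurable.iterate k)).pow_const (1/α))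
  have hC0 : ∀ x, 0 ≤ C x := fun x =>
    Finset.prod_nonneg fun k _ => Real.rpow_nonneg (wgt_nonneg T μ _) _
  -- a.e. positivity of C and identification of C ^ α with wgtn
  have hCpos : ∀ᵐ x ∂μ, 0 < C x := by
    have h1 : ∀ᵐ x ∂μ, ∀ k : ℕ, k ∈ Finset.range n → 0 < wgt T μ ((⇑T)^[k] x) := by
      rw [ae_all_iff]
      intro k
      exact (wgt_pos_iter hT k).mono fun x hx _ => hx
    filter_upwards [h1] with x hx
    exact Finset.prod_pos fun k hk => Real.rpow_pos_of_pos (hx k hk) _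
  have hCα : ∀ x, C x ^ α = ∏ k ∈ Finset.range n, wgt T μ ((⇑T)^[k] x) := by
    intro x
    show (∏ k ∈ Finset.range n, wgt T μ ((⇑T)^[k] x) ^ (1/α)) ^ α = _
    rw [← Real.finset_prod_rpow _ _ (fun k _ => Real.rpow_nonneg (wgt_nonneg T μ _) _) α]
    refine Finset.prod_congr rfl fun k _ => ?_
    rw [← Real.rpow_mul (wgt_nonneg T μ _), one_div_mul_cancel hα.ne', Real.rpow_one]
  -- the main ennreal quantities
  set G : ℝ≥0∞ := ∫⁻ s, ENNReal.ofReal (g s) ^ (2:ℝ) ∂(mIoi α) with hGdef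
  set I : ℝ≥0∞ :=
    ∫⁻ ω, ENNReal.ofReal (Real.sqrt (wgtn T μ n ω) * f ((⇑T)^[n] ω) * f ω) ∂μ with hIdef
  set F2 : ℝ≥0∞ := ∫⁻ ω, ENNReal.ofReal (f ω) ^ (2:ℝ) ∂μ with hF2def
  have hG_ne : G ≠ ⊤ := memLp_two_lintegral_ne_top hg0 hg2
  have hF2_ne : F2 ≠ ⊤ := memLp_two_lintegral_ne_top hf0 hf2
  have hpq : Real.HolderConjugate 2 2 := Real.holderConjugate_iff.mpr ⟨one_lt_two, by norm_num⟩
  -- finiteness of I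
  haveI : SigmaFinite (μ.map ((⇑T.symm)^[n])) := by
    rw [← iterSymm_coe]; exact (iterSymm T n).sigmaFinite_map
  have hI_ne : I ≠ ⊤ := by
    have hφm : Measurable fun ω =>
        ENNReal.ofReal (Real.sqrt (wgtn T μ n ω)) * ENNReal.ofReal (f ((⇑T)^[n] ω)) :=
      ((Real.continuous_sqrt.measurable.comp hwnm).ennreal_ofReal).mul
        ((hfm.comp (T.measurable.iterate n)).ennreal_ofReal)
    have hsplit : I = ∫⁻ ω,
        (ENNReal.ofReal (Real.sqrt (wgtn T μ n ω)) * ENNReal.ofReal (f ((⇑T)^[n] ω)))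
          * ENNReal.ofReal (f ω) ∂μ := by
      refine lintegral_congr fun ω => ?_
      rw [ENNReal.ofReal_mul (mul_nonneg (Real.sqrt_nonneg _) (hf0 _)),
        ENNReal.ofReal_mul (Real.sqrt_nonneg _)]
    have hCS := ENNReal.lintegral_mul_le_Lp_mul_Lq μ hpq hφm.aemeasurable
      (hfm.ennreal_ofReal).aemeasurable
    have hA : (∫⁻ ω, (ENNReal.ofReal (Real.sqrt (wgtn T μ n ω))
        * ENNReal.ofReal (f ((⇑T)^[n] ω))) ^ (2:ℝ) ∂μ) ≤ F2 := by
      have heq : ∀ ω, (ENNReal.ofReal (Real.sqrt (wgtn T μ n ω))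
          * ENNReal.ofReal (f ((⇑T)^[n] ω))) ^ (2:ℝ)
          = (μ.map ((⇑T.symm)^[n])).rnDeriv μ ω * ENNReal.ofReal (f ((⇑T)^[n] ω)) ^ (2:ℝ) →
          True := fun _ _ => trivial
      clear heq
      have h1 : (∫⁻ ω, (ENNReal.ofReal (Real.sqrt (wgtn T μ n ω))
          * ENNReal.ofReal (f ((⇑T)^[n] ω))) ^ (2:ℝ) ∂μ)
          = ∫⁻ ω, (μ.map ((⇑T.symm)^[n])).rnDeriv μ ω
              * (ENNReal.ofReal (f ((⇑T)^[n] ω)) ^ (2:ℝ)) ∂μ := by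
        refine lintegral_congr_ae ?_
        filter_upwards [Measure.rnDeriv_lt_top (μ.map ((⇑T.symm)^[n])) μ] with ω hω
        rw [ENNReal.mul_rpow_of_nonneg _ _ (by norm_num : (0:ℝ) ≤ 2),
          ofReal_sqrt_rpow_two (wgtn_nonneg T μ n ω)]
        congr 1
        exact ENNReal.ofReal_toReal hω.ne
      have hhm : Measurable fun ω => ENNReal.ofReal (f ((⇑T)^[n] ω)) ^ (2:ℝ) :=
        ((hfm.comp (T.measurable.iterate n)).ennreal_ofReal).pow_const _
      have h2 : (∫⁻ ω, (μ.map ((⇑T.symm)^[n])).rnDeriv μ ω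
              * (ENNReal.ofReal (f ((⇑T)^[n] ω)) ^ (2:ℝ)) ∂μ)
          = ∫⁻ ω, ENNReal.ofReal (f ((⇑T)^[n] ω)) ^ (2:ℝ)
              ∂(μ.withDensity ((μ.map ((⇑T.symm)^[n])).rnDeriv μ)) :=
        (lintegral_withDensity_eq_lintegral_mul _ (Measure.measurable_rnDeriv _ _) hhm).symm
      have h3 : (∫⁻ ω, ENNReal.ofReal (f ((⇑T)^[n] ω)) ^ (2:ℝ)
              ∂(μ.withDensity ((μ.map ((⇑T.symm)^[n])).rnDeriv μ)))
          ≤ ∫⁻ ω, ENNReal.ofReal (f ((⇑T)^[n] ω)) ^ (2:ℝ) ∂(μ.map ((⇑T.symm)^[n])) :=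
        lintegral_mono' (Measure.withDensity_rnDeriv_le _ _) le_rfl
      have h4 : (∫⁻ ω, ENNReal.ofReal (f ((⇑T)^[n] ω)) ^ (2:ℝ) ∂(μ.map ((⇑T.symm)^[n])))
          = F2 := by
        rw [← iterSymm_coe, lintegral_map_equiv _ (iterSymm T n), hF2def]
        refine lintegral_congr fun ω => ?_
        rw [iterSymm_coe, iter_iter_symm]
      rw [h1, h2, ← h4]
      exact h3
    have : I ≤ F2 ^ (1/(2:ℝ)) * F2 ^ (1/(2:ℝ)) := by
      rw [hsplit]
      refine hCS.trans ?_
      exact mul_le_mul' (ENNReal.rpow_le_rpow hA (by norm_num)) le_rfl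
    refine ne_top_of_le_ne_top ?_ this
    exact ENNReal.mul_ne_top
      (ENNReal.rpow_ne_top_of_nonneg (by norm_num) hF2_ne)
      (ENNReal.rpow_ne_top_of_nonneg (by norm_num) hF2_ne)
  -- the lhs lintegral
  set L : ℝ≥0∞ := ∫⁻ p, ENNReal.ofReal
      ((f ((Mah α T μ)^[n] p).1 * g ((Mah α T μ)^[n] p).2) * (f p.1 * g p.2))
      ∂(μ.prod (mIoi α)) with hLdef
  -- rewrite lhs real integral
  have hMahm : Measurable ((Mah α T μ)^[n]) := (Mah_measurable α T μ).iterate n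
  have hFm : Measurable fun p : Ω × ℝ =>
      (f ((Mah α T μ)^[n] p).1 * g ((Mah α T μ)^[n] p).2) * (f p.1 * g p.2) :=
    (((hfm.comp (measurable_fst.comp hMahm)).mul
      (hgm.comp (measurable_snd.comp hMahm)))).mul
      ((hfm.comp measurable_fst).mul (hgm.comp measurable_snd))
  have hLHS : (∫ p, (f ((Mah α T μ)^[n] p).1 * g ((Mah α T μ)^[n] p).2) * (f p.1 * g p.2)
      ∂(μ.prod (mIoi α))) = L.toReal := by
    rw [hLdef, integral_eq_lintegral_of_nonneg_ae
      (Filter.Eventually.of_forall fun p =>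
        mul_nonneg (mul_nonneg (hf0 _) (hg0 _)) (mul_nonneg (hf0 _) (hg0 _)))
      hFm.aestronglyMeasurable]
  -- rewrite rhs
  have hRHS1 : (∫ s, g s ^ 2 ∂(mIoi α)) = G.toReal := by
    rw [integral_eq_lintegral_of_nonneg_ae
      (Filter.Eventually.of_forall fun s => sq_nonneg (g s))
      (hgm.pow_const 2).aestronglyMeasurable, hGdef]
    congr 1
    exact lintegral_congr fun s => ofReal_rpow_two_eq (hg0 s)
  have hRHS2 : (∫ ω, Real.sqrt (wgtn T μ n ω) * f ((⇑T)^[n] ω) * f ω ∂μ) = I.toReal := by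
    rw [integral_eq_lintegral_of_nonneg_ae
      (Filter.Eventually.of_forall fun ω =>
        mul_nonneg (mul_nonneg (Real.sqrt_nonneg _) (hf0 _)) (hf0 _))
      (((Real.continuous_sqrt.measurable.comp hwnm).mul
        (hfm.comp (T.measurable.iterate n))).mul hfm).aestronglyMeasurable, hIdef]
  -- key bound : L ≤ G * I
  have hkey : L ≤ I * G := by
    have hsplit : L = ∫⁻ x, ∫⁻ y, ENNReal.ofReal (f ((⇑T)^[n] x) * f x)
        * (ENNReal.ofReal (g (y * C x)) * ENNReal.ofReal (g y)) ∂(mIoi α) ∂μ := by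
      rw [hLdef]
      have hptw : ∀ p : Ω × ℝ, ENNReal.ofReal
          ((f ((Mah α T μ)^[n] p).1 * g ((Mah α T μ)^[n] p).2) * (f p.1 * g p.2))
          = ENNReal.ofReal (f ((⇑T)^[n] p.1) * f p.1)
            * (ENNReal.ofReal (g (p.2 * C p.1)) * ENNReal.ofReal (g p.2)) := by
        intro p
        rw [Mah_iterate]
        rw [mul_mul_mul_comm, ENNReal.ofReal_mul (mul_nonneg (hf0 _) (hf0 _)),
          ENNReal.ofReal_mul (hg0 _)]
      have hintm : Measurable fun p : Ω × ℝ => ENNReal.ofReal (f ((⇑T)^[n] p.1) * f p.1)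
          * (ENNReal.ofReal (g (p.2 * C p.1)) * ENNReal.ofReal (g p.2)) := by
        refine Measurable.mul (f := fun p : Ω × ℝ => ENNReal.ofReal (f ((⇑T)^[n] p.1) * f p.1))
          (g := fun p : Ω × ℝ => ENNReal.ofReal (g (p.2 * C p.1)) * ENNReal.ofReal (g p.2)) ?_
          (Measurable.mul (f := fun p : Ω × ℝ => ENNReal.ofReal (g (p.2 * C p.1)))
            (g := fun p : Ω × ℝ => ENNReal.ofReal (g p.2)) ?_ ?_)
        · exact (((hfm.comp (T.measurable.iterate n)).comp measurable_fst).mul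
            (hfm.comp measurable_fst)).ennreal_ofReal
        · exact (hgm.comp (measurable_snd.mul (hCm.comp measurable_fst))).ennreal_ofReal
        · exact (hgm.comp measurable_snd).ennreal_ofReal
      rw [lintegral_congr hptw, lintegral_prod _ hintm.aemeasurable]
    rw [hsplit]
    have hinner : ∀ᵐ x ∂μ, (∫⁻ y, ENNReal.ofReal (f ((⇑T)^[n] x) * f x)
        * (ENNReal.ofReal (g (y * C x)) * ENNReal.ofReal (g y)) ∂(mIoi α))
        ≤ ENNReal.ofReal (Real.sqrt (wgtn T μ n x) * f ((⇑T)^[n] x) * f x) * G := by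
      filter_upwards [hCpos, wgtn_prod hT n] with x hx hwx
      have hym : Measurable fun y =>
          ENNReal.ofReal (g (y * C x)) * ENNReal.ofReal (g y) :=
        ((hgm.comp (measurable_mul_const (C x))).ennreal_ofReal).mul hgm.ennreal_ofReal
      rw [lintegral_const_mul _ hym]
      have hbound := inner_holder α hgm hx
      have hsqrt : Real.sqrt (C x ^ α) = Real.sqrt (wgtn T μ n x) := by
        rw [hCα x, hwx]
      calc ENNReal.ofReal (f ((⇑T)^[n] x) * f x)
            * ∫⁻ y, ENNReal.ofReal (g (y * C x)) * ENNReal.ofReal (g y) ∂(mIoi α)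
          ≤ ENNReal.ofReal (f ((⇑T)^[n] x) * f x)
            * (ENNReal.ofReal (Real.sqrt (C x ^ α)) * G) := mul_le_mul_right hbound _
        _ = ENNReal.ofReal (Real.sqrt (wgtn T μ n x) * f ((⇑T)^[n] x) * f x) * G := by
            rw [hsqrt, ENNReal.ofReal_mul (mul_nonneg (Real.sqrt_nonneg _) (hf0 _)),
              ENNReal.ofReal_mul (Real.sqrt_nonneg _),
              ENNReal.ofReal_mul (hf0 _)]
            ring
    calc (∫⁻ x, ∫⁻ y, ENNReal.ofReal (f ((⇑T)^[n] x) * f x)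
        * (ENNReal.ofReal (g (y * C x)) * ENNReal.ofReal (g y)) ∂(mIoi α) ∂μ)
        ≤ ∫⁻ x, ENNReal.ofReal (Real.sqrt (wgtn T μ n x) * f ((⇑T)^[n] x) * f x) * G ∂μ :=
          lintegral_mono_ae hinner
      _ = I * G := by
          rw [hIdef]
          exact lintegral_mul_const _
            (((Real.continuous_sqrt.measurable.comp hwnm).mul
              (hfm.comp (T.measurable.iterate n))).mul hfm).ennreal_ofReal
  -- conclude
  rw [hLHS, hRHS1, hRHS2, ← ENNReal.toReal_mul]
  exact ENNReal.toReal_mono (ENNReal.mul_ne_top hG_ne hI_ne) (hkey.trans_eq (mul_comm I G))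
end
end
end
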